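/- For α > 0, b ≥ 0, ρ < α + 1, and t > 0, the Sumudu transform of the function t ↦ t^{α−ρ} E_{α, α−ρ+1}(−b t^α) evaluated at u > 0 with b u^α < 1 equals u^{−ρ}/(u^{−α} + b), i.e. ∫₀^∞ e^{-s} (u s)^{α−ρ} E_{α,α−ρ+1}(−b (u s)^α) ds = u^{α−ρ}/(1 + b u^{α}). -/

import Mathlib

open MeasureTheory Real

/-- Real two-parameter Mittag-Leffler function. -/
noncomputable def mittagLeffler (α β z : ℝ) : ℝ :=
  ∑' n : ℕ, z ^ n / Real.Gamma (n * α + β)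

theorem sumudu_mittagLeffler (α b ρ u : ℝ) (hα : 0 < α) (hb : 0 ≤ b)
    (hρ : ρ < α + 1) (hu : 0 < u) (hbu : b * u ^ α < 1) :
    ∫ s in Set.Ioi (0 : ℝ),
      Real.exp (-s) * (u * s) ^ (α - ρ) * mittagLeffler α (α - ρ + 1) (-b * (u * s) ^ α)
      = u ^ (α - ρ) / (1 + b * u ^ α) := by
  set r : ℝ := b * u ^ α with hrdef
  have hr0 : 0 ≤ r := mul_nonneg hb (Real.rpow_nonneg hu.le α)
  have hp : ∀ n : ℕ, 0 < (n : ℝ) * α + (α - ρ + 1) := fun n =>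
    add_pos_of_nonneg_of_pos (mul_nonneg n.cast_nonneg hα.le) (by linarith)
  have hGpos : ∀ n : ℕ, 0 < Real.Gamma ((n : ℝ) * α + (α - ρ + 1)) :=
    fun n => Real.Gamma_pos_of_pos (hp n)
  set g : ℕ → ℝ → ℝ := fun n s =>
    ((-r) ^ n * u ^ (α - ρ) / Real.Gamma ((n : ℝ) * α + (α - ρ + 1))) *
      (Real.exp (-s) * s ^ ((n : ℝ) * α + (α - ρ + 1) - 1)) with hgdef
  -- integrability of each term
  have hint : ∀ n : ℕ, Integrable (g n) (volume.restrict (Set.Ioi (0:ℝ))) := by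
    intro n
    exact (Real.GammaIntegral_convergent (hp n)).const_mul _
  -- integral of each term
  have hintg : ∀ n : ℕ, ∫ s in Set.Ioi (0:ℝ), g n s = (-r) ^ n * u ^ (α - ρ) := by
    intro n
    rw [hgdef]
    simp only
    rw [integral_const_mul, ← Real.Gamma_eq_integral (hp n)]
    rw [div_mul_eq_mul_div, mul_div_assoc, div_self (hGpos n).ne', mul_one]
  -- norm of each term on Ioi 0
  have hnorm : ∀ n : ℕ, ∀ s : ℝ, 0 < s → ‖g n s‖ =
      (r ^ n * u ^ (α - ρ) / Real.Gamma ((n : ℝ) * α + (α - ρ + 1))) *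
        (Real.exp (-s) * s ^ ((n : ℝ) * α + (α - ρ + 1) - 1)) := by
    intro n s hs
    rw [hgdef]
    simp only [Real.norm_eq_abs, abs_mul, abs_div, abs_pow, abs_neg]
    rw [abs_of_nonneg hr0, abs_of_nonneg (Real.rpow_nonneg hu.le _),
      abs_of_nonneg (hGpos n).le, abs_of_nonneg (Real.exp_pos _).le,
      abs_of_nonneg (Real.rpow_nonneg hs.le _)]
  -- integral of norms
  have hnormint : ∀ n : ℕ, (∫ s in Set.Ioi (0:ℝ), ‖g n s‖) = r ^ n * u ^ (α - ρ) := by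
    intro n
    rw [MeasureTheory.setIntegral_congr_fun measurableSet_Ioi
      (fun s hs => hnorm n s hs)]
    rw [integral_const_mul, ← Real.Gamma_eq_integral (hp n)]
    rw [div_mul_eq_mul_div, mul_div_assoc, div_self (hGpos n).ne', mul_one]
  have hsummable : Summable fun n : ℕ => ∫ s in Set.Ioi (0:ℝ), ‖g n s‖ := by
    simp only [hnormint]
    exact (summable_geometric_of_lt_one hr0 hbu).mul_right _
  -- pointwise identity on Ioi 0
  have hpt : ∀ s ∈ Set.Ioi (0:ℝ),
      Real.exp (-s) * (u * s) ^ (α - ρ) * mittagLeffler α (α - ρ + 1) (-b * (u * s) ^ α)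
        = ∑' n : ℕ, g n s := by
    intro s hs
    have hs : (0:ℝ) < s := hs
    have hus : 0 < u * s := mul_pos hu hs
    unfold mittagLeffler
    rw [← tsum_mul_left]
    congr 1
    funext n
    have husα : (u * s) ^ α = u ^ α * s ^ α := Real.mul_rpow hu.le hs.le
    have h1 : -b * (u * s) ^ α = (-r) * s ^ α := by rw [husα, hrdef]; ring
    have h2 : (s ^ α) ^ n = s ^ (α * (n:ℝ)) := by
      rw [← Real.rpow_natCast (s ^ α) n, ← Real.rpow_mul hs.le]
    have h3 : (u * s) ^ (α - ρ) = u ^ (α - ρ) * s ^ (α - ρ) := Real.mul_rpow hu.le hs.le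
    have h4 : s ^ ((n : ℝ) * α + (α - ρ + 1) - 1) = s ^ (α * (n:ℝ)) * s ^ (α - ρ) := by
      rw [← Real.rpow_add hs]; ring_nf
    rw [hgdef]
    simp only
    rw [h1, mul_pow, h2, h3, h4]
    have hG := (hGpos n).ne'
    field_simp
  rw [MeasureTheory.setIntegral_congr_fun measurableSet_Ioi hpt,
    ← MeasureTheory.integral_tsum_of_summable_integral_norm hint hsummable]
  simp only [hintg]
  rw [tsum_mul_right, tsum_geometric_of_norm_lt_one (by
    rw [norm_neg, Real.norm_eq_abs, abs_of_nonneg hr0]; exact hbu)]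
  rw [sub_neg_eq_add]
  field_simp
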